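/- Suppose every agent i ∈ N has an additive valuation v_i(X) = Σ_{k∈X} v_{i,k} with nonnegative item values, and the items are ordered identically for all agents: v_{i,1} ≥ v_{i,2} ≥ … ≥ v_{i,m} for every i ∈ N. Then there exists an allocation (X_i)_{i∈N} of all of M that is EFX: for every pair of agents i, j and every item k ∈ X_j, it holds that v_i(X_i) ≥ v_i(X_j ∖ {k}). -/

import Mathlib

/-!  Common setup for fair division: agents `N`, items `I`, monotone valuations
`v : N → Finset I → ℝ`, allocations `(𝒳, μ)` given by a bundle family `X : N → Finset I`
and a bijection `σ : Equiv.Perm N` on indices (agent `i` receives bundle `X (σ i)`),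
the assign-envy graph, and its auxiliary directed graph. -/

variable {N I : Type*}

/-- Weight of a walk in a directed graph, given by its list of vertices. -/
def walkWeight {V : Type*} (W : V → V → ℝ) (l : List V) : ℝ :=
  ((l.zip l.tail).map fun p => W p.1 p.2).sum

/-- A (simple) directed cycle, given by the list of its vertices (the closing edge
from the last vertex back to the first is implicit). -/
def IsDiCycle {V : Type*} (adj : V → V → Prop) (l : List V) : Prop :=
  l ≠ [] ∧ l.Nodup ∧ (l ++ l.take 1).Chain' adj

/-- Total weight of a directed cycle (including the closing edge). -/
def cycleWeight {V : Type*} (W : V → V → ℝ) (l : List V) : ℝ :=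
  walkWeight W (l ++ l.take 1)

/-- Adjacency (on indices) of the assign-envy graph `G(𝒳, μ)` of the allocation `(X, σ)`:
agent `i` is joined to its own bundle `X (σ i)` and to every bundle it envies. -/
def aeAdj (v : N → Finset I → ℝ) (X : N → Finset I) (σ : Equiv.Perm N) (i j : N) : Prop :=
  j = σ i ∨ v i (X (σ i)) < v i (X j)

/-- Edge weights of the assign-envy graph: `w(i, X_j) = −v_i(X_j)`. -/
def aeW (v : N → Finset I → ℝ) (X : N → Finset I) (i j : N) : ℝ := - v i (X j)

/-- Auxiliary directed graph of a bipartite graph on `N ⊕ N` (agents on the left, bundle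
indices on the right) with respect to the perfect matching given by a permutation `τ`:
non-matching edges go left-to-right, matching edges are reversed. -/
def aeAux (adj : N → N → Prop) (τ : Equiv.Perm N) : N ⊕ N → N ⊕ N → Prop
  | Sum.inl i, Sum.inr j => adj i j ∧ j ≠ τ i
  | Sum.inr j, Sum.inl i => j = τ i
  | _, _ => False

/-- Auxiliary weights on the auxiliary directed graph: forward edges keep their weight,
reversed matching edges get the negated weight. -/
def aeAuxW (W : N → N → ℝ) : N ⊕ N → N ⊕ N → ℝ
  | Sum.inl i, Sum.inr j => W i j
  | Sum.inr j, Sum.inl i => - W i j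
  | _, _ => 0

/-- EF1 (envy-freeness up to one item) for a family of assigned bundles `Y : N → Finset I`. -/
def EF1 [DecidableEq I] (v : N → Finset I → ℝ) (Y : N → Finset I) : Prop :=
  ∀ i j : N, v i (Y i) ≥ v i (Y j) ∨ ∃ k ∈ Y j, v i (Y i) ≥ v i ((Y j).erase k)


private lemma myCycle {α : Type*} [Fintype α] (g : α → α) (a : α) :
    ∃ (x : α) (p : ℕ), 0 < p ∧ g^[p] x = x ∧
      ∀ s s' : ℕ, s < s' → s' < p → g^[s] x ≠ g^[s'] x := by
  classical
  obtain ⟨k, l, hkl, he⟩ := Fintype.exists_ne_map_eq_of_card_lt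
    (fun k : Fin (Fintype.card α + 1) => g^[(k : ℕ)] a) (by simp)
  have h2 : ∃ k l : ℕ, k < l ∧ g^[k] a = g^[l] a := by
    rcases lt_or_gt_of_ne (Fin.val_ne_of_ne hkl) with h | h
    · exact ⟨k, l, h, he⟩
    · exact ⟨l, k, h, he.symm⟩
  obtain ⟨k, l, hkl', he'⟩ := h2
  obtain ⟨x, q, hq0, hqx⟩ : ∃ (x : α) (q : ℕ), 0 < q ∧ g^[q] x = x := by
    refine ⟨g^[k] a, l - k, by omega, ?_⟩
    rw [← Function.iterate_add_apply, show l - k + k = l by omega]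
    exact he'.symm
  have hP : ∃ p, 0 < p ∧ g^[p] x = x := ⟨q, hq0, hqx⟩
  refine ⟨x, Nat.find hP, (Nat.find_spec hP).1, (Nat.find_spec hP).2, ?_⟩
  intro s s' hss hsp he2
  have h3 : g^[Nat.find hP - s'] (g^[s] x) = g^[Nat.find hP - s'] (g^[s'] x) := by rw [he2]
  rw [← Function.iterate_add_apply, ← Function.iterate_add_apply,
    show Nat.find hP - s' + s' = Nat.find hP by omega, (Nat.find_spec hP).2] at h3
  exact Nat.find_min hP (show Nat.find hP - s' + s < Nat.find hP by omega) ⟨by omega, h3⟩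

private lemma exists_good_perm {N : Type*} [Fintype N] [Nonempty N] (W : N → N → ℝ) :
    ∃ π : Equiv.Perm N, (∀ i, W i i ≤ W i (π i)) ∧
      ∃ i₀ : N, ∀ j, W j (π i₀) ≤ W j (π j) := by
  classical
  have hS : (Finset.univ.filter fun π : Equiv.Perm N => ∀ i, W i i ≤ W i (π i)).Nonempty :=
    ⟨1, by simp⟩
  obtain ⟨π, hπmem, hmax⟩ :=
    Finset.exists_max_image _ (fun π : Equiv.Perm N => ∑ i, W i (π i)) hS
  simp only [Finset.mem_filter, Finset.mem_univ, true_and] at hπmem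
  refine ⟨π, hπmem, ?_⟩
  by_contra hcon
  push_neg at hcon
  choose g hg using hcon
  have hgne : ∀ y, g y ≠ y := by
    intro y h
    have := hg y; rw [h] at this; exact lt_irrefl _ this
  obtain ⟨x, p, hp, hpx, hnd⟩ := myCycle g (Classical.arbitrary N)
  set l : List N := (List.range p).map (fun s => g^[s] x) with hl
  have hlen : l.length = p := by simp [hl]
  have hlnd : l.Nodup := by
    rw [hl]
    refine List.Nodup.map_on ?_ (List.nodup_range (n := p))
    intro s hs s' hs' hee
    rw [List.mem_range] at hs hs'
    rcases Nat.lt_trichotomy s s' with h | h | h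
    · exact absurd hee (hnd s s' h hs')
    · exact h
    · exact absurd hee.symm (hnd s' s h hs)
  set c := l.formPerm with hc
  have hmem_g : ∀ y ∈ l, c y = g y := by
    intro y hy
    rw [hl, List.mem_map] at hy
    obtain ⟨s, hs, rfl⟩ := hy
    rw [List.mem_range] at hs
    have hsl : s < l.length := by omega
    have h1 : c (l[s]'hsl) = l[(s + 1) % l.length]'(Nat.mod_lt _ (by omega)) :=
      List.formPerm_apply_getElem l hlnd s hsl
    have hgs : l[s]'hsl = g^[s] x := by simp [hl]
    have hgs1 : l[(s + 1) % l.length]'(Nat.mod_lt _ (by omega)) = g^[(s + 1) % p] x := by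
      simp [hl]
    rw [hgs, hgs1] at h1
    have h2 : g^[(s + 1) % p] x = g^[s + 1] x := by
      rcases eq_or_lt_of_le (Nat.succ_le_of_lt hs) with h | h
      · have h' : s + 1 = p := h
        rw [h', Nat.mod_self, Function.iterate_zero_apply, hpx]
      · rw [Nat.mod_eq_of_lt h]
    rw [h2, Function.iterate_succ_apply'] at h1
    exact h1
  have hfix : ∀ y, y ∉ l → c y = y := fun y hy => List.formPerm_apply_of_notMem hy
  have hmem_inv : ∀ y ∈ l, c⁻¹ y ∈ l := by
    intro y hy
    by_contra h
    have h1 : c (c⁻¹ y) = c⁻¹ y := hfix _ h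
    rw [show c (c⁻¹ y) = y from Equiv.apply_symm_apply c y] at h1
    rw [← h1] at h; exact h hy
  set π' : Equiv.Perm N := π * c⁻¹ with hπ'
  have hπ'app : ∀ i, π' i = π (c⁻¹ i) := fun i => rfl
  have keystrict : ∀ i ∈ l, W i (π i) < W i (π' i) := by
    intro i hi
    have hy := hmem_inv i hi
    have h1 : c (c⁻¹ i) = i := Equiv.apply_symm_apply c i
    have h2 : g (c⁻¹ i) = i := by rw [← hmem_g _ hy, h1]
    have h3 := hg (c⁻¹ i)
    rw [h2] at h3
    rw [hπ'app]
    exact h3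
  have key : ∀ i, W i (π i) ≤ W i (π' i) := by
    intro i
    by_cases hi : i ∈ l
    · exact (keystrict i hi).le
    · have h1 : c i = i := hfix i hi
      have h2 : c⁻¹ i = i := by nth_rewrite 1 [← h1]; exact Equiv.symm_apply_apply c i
      rw [hπ'app, h2]
  have hgxl : g x ∈ l := by
    have h1p : 1 < p := by
      rcases Nat.lt_or_ge 1 p with h | h
      · exact h
      · exfalso
        have hp1 : p = 1 := by omega
        rw [hp1] at hpx
        simp only [Function.iterate_one] at hpx
        exact hgne x hpx
    rw [hl, List.mem_map]
    exact ⟨1, List.mem_range.2 h1p, by simp⟩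
  have hsum : ∑ i, W i (π i) < ∑ i, W i (π' i) :=
    Finset.sum_lt_sum (fun i _ => key i) ⟨g x, Finset.mem_univ _, keystrict _ hgxl⟩
  have hmem' : π' ∈ Finset.univ.filter fun π : Equiv.Perm N => ∀ i, W i i ≤ W i (π i) := by
    simp only [Finset.mem_filter, Finset.mem_univ, true_and]
    exact fun i => le_trans (hπmem i) (key i)
  have := hmax π' hmem'
  linarith

/-- If every agent has an additive valuation with nonnegative item values
`val i k`, and the items `1, …, m` are ordered identically for all agents
(`v_{i,1} ≥ v_{i,2} ≥ … ≥ v_{i,m}` for every `i`), then there exists an EFX allocation of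
all items. -/
theorem exists_EFX_allocation_identical_order
    {m : ℕ} [Fintype N] [Nonempty N]
    (val : N → Fin m → ℝ)
    (hnonneg : ∀ (i : N) (k : Fin m), 0 ≤ val i k)
    (horder : ∀ i : N, ∀ k k' : Fin m, k ≤ k' → val i k' ≤ val i k) :
    ∃ X : N → Finset (Fin m),
      (∀ i j : N, i ≠ j → Disjoint (X i) (X j)) ∧
      (∀ k : Fin m, ∃ i : N, k ∈ X i) ∧
      ∀ i j : N, ∀ k ∈ X j,
        (∑ a ∈ (X j).erase k, val i a) ≤ ∑ a ∈ X i, val i a := by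
  classical
  set v : N → Finset (Fin m) → ℝ := fun i S => ∑ a ∈ S, val i a with hv
  suffices h : ∀ t : ℕ, t ≤ m → ∃ X : N → Finset (Fin m),
      (∀ i j, i ≠ j → Disjoint (X i) (X j)) ∧
      (∀ i, ∀ k ∈ X i, (k : ℕ) < t) ∧
      (∀ k : Fin m, (k : ℕ) < t → ∃ i, k ∈ X i) ∧
      (∀ i j, ∀ k ∈ X j, v i ((X j).erase k) ≤ v i (X i)) by
    obtain ⟨X, h1, _, h3, h4⟩ := h m le_rfl
    exact ⟨X, h1, fun k => h3 k k.isLt, h4⟩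
  intro t
  induction t with
  | zero =>
    intro _
    refine ⟨fun _ => ∅, fun i j _ => by simp, fun i k hk => by simp at hk,
      fun k hk => absurd hk (by omega), fun i j k hk => by simp at hk⟩
  | succ t ih =>
    intro ht
    obtain ⟨X, hdisj, hbd, hcov, hefx⟩ := ih (Nat.le_of_succ_le ht)
    obtain ⟨π, hπ, i₀, hi₀⟩ := exists_good_perm (fun i j => v i (X j))
    set Y : N → Finset (Fin m) := fun j => X (π j) with hY
    have hYdisj : ∀ i j, i ≠ j → Disjoint (Y i) (Y j) :=
      fun i j hij => hdisj _ _ (fun h => hij (π.injective h))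
    have hYbd : ∀ i, ∀ k ∈ Y i, (k : ℕ) < t := fun i k hk => hbd _ _ hk
    have hYcov : ∀ k : Fin m, (k : ℕ) < t → ∃ i, k ∈ Y i := by
      intro k hk
      obtain ⟨i, hi⟩ := hcov k hk
      exact ⟨π⁻¹ i, by simpa [hY] using hi⟩
    have hYefx : ∀ i j, ∀ k ∈ Y j, v i ((Y j).erase k) ≤ v i (Y i) :=
      fun i j k hk => le_trans (hefx i (π j) k hk) (hπ i)
    have hi₀' : ∀ j, v j (Y i₀) ≤ v j (Y j) := hi₀
    set it : Fin m := ⟨t, ht⟩ with hit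
    have hitnot : ∀ j, it ∉ Y j := by
      intro j h
      have := hYbd j it h
      simp [hit] at this
    set X' : N → Finset (Fin m) := fun j => if j = i₀ then insert it (Y i₀) else Y j with hX'
    have hX'i₀ : X' i₀ = insert it (Y i₀) := by simp [hX']
    have hX'ne : ∀ j, j ≠ i₀ → X' j = Y j := by
      intro j hj; simp [hX', hj]
    have hX'sub : ∀ j, Y j ⊆ X' j := by
      intro j
      by_cases h : j = i₀
      · rw [h, hX'i₀]; exact Finset.subset_insert _ _
      · rw [hX'ne j h]
    have hins : ∀ i, v i (insert it (Y i₀)) = val i it + v i (Y i₀) := by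
      intro i
      rw [hv]; simp only
      rw [Finset.sum_insert (hitnot i₀)]
    have base : ∀ i', v i' (Y i') ≤ v i' (X' i') := by
      intro i'
      by_cases h : i' = i₀
      · rw [h, hX'i₀, hins i₀]
        linarith [hnonneg i₀ it]
      · rw [hX'ne i' h]
    refine ⟨X', ?_, ?_, ?_, ?_⟩
    · intro i j hij
      by_cases hi : i = i₀ <;> by_cases hj : j = i₀
      · exact absurd (hi.trans hj.symm) hij
      · rw [hi, hX'i₀, hX'ne j hj, Finset.disjoint_insert_left]
        exact ⟨hitnot j, hYdisj i₀ j (fun h => hij (by rw [hi, h]))⟩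
      · rw [hj, hX'i₀, hX'ne i hi, Finset.disjoint_insert_right]
        exact ⟨hitnot i, hYdisj i i₀ (fun h => hij (by rw [hj, h]))⟩
      · rw [hX'ne i hi, hX'ne j hj]
        exact hYdisj i j hij
    · intro i k hk
      by_cases h : i = i₀
      · rw [h, hX'i₀] at hk
        rcases Finset.mem_insert.1 hk with rfl | hk'
        · simp [hit]
        · exact Nat.lt_succ_of_lt (hYbd _ _ hk')
      · rw [hX'ne i h] at hk
        exact Nat.lt_succ_of_lt (hYbd _ _ hk)
    · intro k hk
      rcases Nat.lt_or_ge (k : ℕ) t with h | h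
      · obtain ⟨i, hi⟩ := hYcov k h
        exact ⟨i, hX'sub i hi⟩
      · have hkeq : k = it := by
          apply Fin.ext
          simp only [hit]
          omega
        exact ⟨i₀, by rw [hX'i₀, hkeq]; exact Finset.mem_insert_self _ _⟩
    · intro i j k hk
      by_cases hj : j = i₀
      · rw [hj, hX'i₀] at hk ⊢
        have hky : val i it ≤ val i k := by
          rcases Finset.mem_insert.1 hk with rfl | hk'
          · exact le_rfl
          · refine horder i k it ?_
            have := hYbd _ _ hk'
            rw [Fin.le_def]
            simp only [hit]
            omega
        have hsum : v i ((insert it (Y i₀)).erase k) + val i k = v i (insert it (Y i₀)) :=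
          Finset.sum_erase_add _ _ hk
        have h1 := hi₀' i
        have h2 := base i
        have h3 := hins i
        linarith
      · rw [hX'ne j hj] at hk ⊢
        exact le_trans (hYefx i j k hk) (base i)
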